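/- arXiv:2505.03687 — 2 statements merged into one kernel-verified Lean document; each statement's English description precedes it below -/
import Mathlib

section
/- Let L be a maximal dissipative operator and M a dissipative operator with Dom(M) ⊆ Dom(L) such that K = M − L satisfies ‖Kv‖ ≤ c‖v‖ + d‖Lv‖ for all v ∈ Dom(L), with c > 0 and 0 < d < 1/2. Then M is a maximal dissipative operator. In particular, for κ > 0 with (2 + c/κ)d < 1, the operator M + iκI has a bounded everywhere-defined inverse. -/
set_option linter.unusedSectionVars false
set_option linter.unusedVariables false


variable {H : Type*} [NormedAddCommGroup H] [InnerProductSpace ℂ H] [CompleteSpace H]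

/-- `L` is dissipative: `Im ⟨Lv, v⟩ ≥ 0` for all `v ∈ Dom L` (inner product linear in the
first argument). -/
def IsDissipative (L : H →ₗ.[ℂ] H) : Prop :=
  ∀ v : L.domain, 0 ≤ (inner ℂ ((v : H)) (L v) : ℂ).im

/-- `L` is maximal dissipative: it is densely defined, dissipative, and `L + iI` is surjective
(equivalently, `L` has no proper dissipative extension). -/
def IsMaximalDissipative (L : H →ₗ.[ℂ] H) : Prop :=
  IsDissipative L ∧ Dense (L.domain : Set H) ∧
    ∀ y : H, ∃ v : L.domain, L v + Complex.I • (v : H) = y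

lemma normA (T : H →ₗ.[ℂ] H) (hT : IsDissipative T) {κ : ℝ} (hκ : 0 < κ) (v : T.domain) :
    κ * ‖(v:H)‖ ≤ ‖T v + (Complex.I * κ) • (v : H)‖ := by
  have h1 : (inner ℂ ((v:H)) (T v + (Complex.I * κ) • (v:H)) : ℂ).im
      = (inner ℂ ((v:H)) (T v) : ℂ).im + κ * ‖(v:H)‖^2 := by
    rw [inner_add_right, inner_smul_right, @inner_self_eq_norm_sq_to_K ℂ]
    simp [Complex.add_im, Complex.mul_im, ← Complex.ofReal_pow]
  have h2 : κ * ‖(v:H)‖^2 ≤ ‖(v:H)‖ * ‖T v + (Complex.I * κ) • (v:H)‖ := by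
    calc κ * ‖(v:H)‖^2 ≤ (inner ℂ ((v:H)) (T v + (Complex.I * κ) • (v:H)) : ℂ).im := by
          rw [h1]; linarith [hT v]
      _ ≤ ‖(inner ℂ ((v:H)) (T v + (Complex.I * κ) • (v:H)) : ℂ)‖ :=
          Complex.im_le_norm _
      _ ≤ ‖(v:H)‖ * ‖T v + (Complex.I * κ) • (v:H)‖ := by
          exact norm_inner_le_norm _ _
  rcases eq_or_lt_of_le (norm_nonneg (v:H)) with h | h
  · rw [← h]; simp [norm_nonneg]
  · rw [pow_two] at h2
    nlinarith

/-- the surjectivity predicate -/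
def SurjAt (T : H →ₗ.[ℂ] H) (κ : ℝ) : Prop :=
  ∀ y : H, ∃ v : T.domain, T v + (Complex.I * κ) • (v : H) = y

lemma uniqA (T : H →ₗ.[ℂ] H) (hT : IsDissipative T) {κ : ℝ} (hκ : 0 < κ) (v w : T.domain)
    (h : T v + (Complex.I * κ) • (v:H) = T w + (Complex.I * κ) • (w:H)) : v = w := by
  have h0 : T (v - w) + (Complex.I * κ) • ((v - w : T.domain) : H) = 0 := by
    rw [T.map_sub]
    push_cast
    rw [smul_sub]
    rw [sub_add_sub_comm, h, sub_self]
  have := normA T hT hκ (v - w)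
  rw [h0, norm_zero] at this
  have hv : ‖((v - w : T.domain) : H)‖ = 0 := by nlinarith [norm_nonneg ((v-w : T.domain):H)]
  have : ((v - w : T.domain) : H) = 0 := norm_eq_zero.mp hv
  have : (v:H) = (w:H) := by
    have := this
    push_cast at this
    linear_combination (norm := abel) this
  exact Subtype.coe_injective this

lemma exists_inverse (T : H →ₗ.[ℂ] H) (hT : IsDissipative T) {κ : ℝ} (hκ : 0 < κ)
    (hs : SurjAt T κ) :
    ∃ R : H →L[ℂ] H, (∀ y : H, ∃ h : R y ∈ T.domain,
        T ⟨R y, h⟩ + (Complex.I * κ) • (R y) = y) ∧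
      (∀ v : T.domain, R (T v + (Complex.I * κ) • (v:H)) = v) ∧ ‖R‖ ≤ κ⁻¹ := by
  classical
  let S : H → T.domain := fun y => (hs y).choose
  have hS : ∀ y, T (S y) + (Complex.I * κ) • ((S y : H)) = y := fun y => (hs y).choose_spec
  have hSuniq : ∀ (y : H) (v : T.domain), T v + (Complex.I * κ) • (v:H) = y → S y = v := by
    intro y v hv
    exact uniqA T hT hκ _ _ (by rw [hS y, hv])
  have hadd : ∀ y y', S (y + y') = S y + S y' := by
    intro y y'
    refine hSuniq _ _ ?_
    rw [T.map_add]
    push_cast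
    rw [smul_add, add_add_add_comm, hS y, hS y']
  have hsmul : ∀ (a : ℂ) (y : H), S (a • y) = a • S y := by
    intro a y
    refine hSuniq _ _ ?_
    rw [T.map_smul]
    push_cast
    rw [smul_comm, ← smul_add, hS y]
  let R0 : H →ₗ[ℂ] H :=
    { toFun := fun y => (S y : H)
      map_add' := fun y y' => by
        show ((S (y + y') : H)) = (S y : H) + (S y' : H)
        rw [hadd]; norm_cast
      map_smul' := fun a y => by
        show ((S (a • y) : H)) = a • (S y : H)
        rw [hsmul]; norm_cast }
  have hbound : ∀ y, ‖R0 y‖ ≤ κ⁻¹ * ‖y‖ := by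
    intro y
    have := normA T hT hκ (S y)
    rw [hS y] at this
    show ‖(S y : H)‖ ≤ κ⁻¹ * ‖y‖
    rw [inv_mul_eq_div, le_div_iff₀' hκ]
    exact this
  refine ⟨R0.mkContinuous κ⁻¹ hbound, ?_, ?_, ?_⟩
  · intro y
    exact ⟨(S y).2, hS y⟩
  · intro v
    exact congrArg Subtype.val (hSuniq _ v rfl)
  · exact R0.mkContinuous_norm_le (by positivity) hbound

lemma surj_near (T : H →ₗ.[ℂ] H) (hT : IsDissipative T) {κ₀ κ : ℝ} (hκ₀ : 0 < κ₀)
    (hκ : 0 < κ) (hlt : κ < 2 * κ₀) (hs : SurjAt T κ₀) : SurjAt T κ := by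
  obtain ⟨R, hR1, hR2, hRn⟩ := exists_inverse T hT hκ₀ hs
  intro y
  set Φ : H → H := fun w => y - (Complex.I * ((κ:ℂ) - (κ₀:ℂ))) • R w with hΦ
  have habs : |κ - κ₀| < κ₀ := abs_lt.mpr ⟨by linarith, by linarith⟩
  have hlip : LipschitzWith ⟨|κ-κ₀|/κ₀, by positivity⟩ Φ := by
    apply LipschitzWith.of_dist_le_mul
    intro w w'
    have hdiff : Φ w - Φ w' = (Complex.I * ((κ:ℂ)-(κ₀:ℂ))) • (R (w' - w)) := by
      simp only [Φ, map_sub, smul_sub]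
      abel
    rw [dist_eq_norm, dist_eq_norm, hdiff, norm_smul]
    have h1 : ‖Complex.I * ((κ:ℂ)-(κ₀:ℂ))‖ = |κ - κ₀| := by
      rw [norm_mul, Complex.norm_I, one_mul, ← Complex.ofReal_sub, Complex.norm_real,
        Real.norm_eq_abs]
    rw [h1]
    have h2 : ‖R (w' - w)‖ ≤ κ₀⁻¹ * ‖w' - w‖ :=
      le_trans (R.le_opNorm _) (mul_le_mul_of_nonneg_right hRn (norm_nonneg _))
    calc |κ - κ₀| * ‖R (w' - w)‖ ≤ |κ - κ₀| * (κ₀⁻¹ * ‖w' - w‖) :=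
          mul_le_mul_of_nonneg_left h2 (abs_nonneg _)
      _ = |κ - κ₀| / κ₀ * ‖w' - w‖ := by ring
      _ = |κ - κ₀| / κ₀ * ‖w - w'‖ := by rw [norm_sub_rev]
  have hC : ContractingWith ⟨|κ-κ₀|/κ₀, by positivity⟩ Φ := by
    refine ⟨?_, hlip⟩
    apply NNReal.coe_lt_coe.mp
    show |κ - κ₀| / κ₀ < 1
    rw [div_lt_one hκ₀]
    exact habs
  obtain ⟨w, hw, -, -⟩ := hC.exists_fixedPoint y (edist_ne_top _ _)
  obtain ⟨h, hTw⟩ := hR1 w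
  refine ⟨⟨R w, h⟩, ?_⟩
  show T ⟨R w, h⟩ + (Complex.I * κ) • (R w) = y
  have hsplit : (Complex.I * (κ:ℂ)) = (Complex.I * (κ₀:ℂ)) + Complex.I * ((κ:ℂ)-(κ₀:ℂ)) := by
    ring
  rw [hsplit, add_smul, ← add_assoc, hTw]
  have h2 : y - (Complex.I * ((κ:ℂ)-(κ₀:ℂ))) • R w = w := hw
  exact (sub_eq_iff_eq_add.mp h2).symm

lemma surj_all (T : H →ₗ.[ℂ] H) (hT : IsDissipative T) {κ₀ : ℝ} (hκ₀ : 0 < κ₀)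
    (hs : SurjAt T κ₀) : ∀ κ : ℝ, 0 < κ → SurjAt T κ := by
  have step : ∀ n : ℕ, SurjAt T ((3/2)^n * κ₀) := by
    intro n
    induction n with
    | zero => simpa using hs
    | succ n ih =>
        have hp : (0:ℝ) < (3/2)^n * κ₀ := by positivity
        refine surj_near T hT hp (by positivity) ?_ ih
        rw [pow_succ]
        nlinarith
  intro κ hκ
  obtain ⟨n, hn⟩ := pow_unbounded_of_one_lt (κ/κ₀) (by norm_num : (1:ℝ) < 3/2)
  have hp : (0:ℝ) < (3/2)^n * κ₀ := by positivity
  refine surj_near T hT hp hκ ?_ (step n)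
  rw [div_lt_iff₀ hκ₀] at hn
  nlinarith

/-- Let `L` be maximal dissipative and `M` a dissipative operator with `Dom M = Dom L`,
`M = L + K` where `‖Kv‖ ≤ c‖v‖ + d‖Lv‖` on `Dom L` with `c > 0` and `0 < d < 1/2`.  Then `M` is
maximal dissipative; in particular, for every `κ > 0` with `(2 + c/κ)d < 1`, the operator
`M + iκI` has a bounded everywhere-defined inverse. -/
theorem maximal_of_strictly_dominated_perturbation (L K M : H →ₗ.[ℂ] H)
    (hL : IsMaximalDissipative L)
    (hdomK : L.domain ≤ K.domain) (hdomM : M.domain = L.domain)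
    (hM : ∀ (v : H) (hv : v ∈ L.domain) (hv' : v ∈ M.domain),
      M ⟨v, hv'⟩ = L ⟨v, hv⟩ + K ⟨v, hdomK hv⟩)
    (hMdis : IsDissipative M)
    (c d : ℝ) (hc : 0 < c) (hd0 : 0 < d) (hd : d < 1 / 2)
    (hKb : ∀ v : L.domain, ‖K ⟨(v : H), hdomK v.2⟩‖ ≤ c * ‖(v : H)‖ + d * ‖L v‖) :
    IsMaximalDissipative M ∧
      ∀ κ : ℝ, 0 < κ → (2 + c / κ) * d < 1 →
        ∃ Rκ : H →L[ℂ] H,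
          (∀ y : H, ∃ h : Rκ y ∈ L.domain,
            L ⟨Rκ y, h⟩ + K ⟨Rκ y, hdomK h⟩ + (Complex.I * κ) • Rκ y = y) ∧
          ∀ v : L.domain,
            Rκ (L v + K ⟨(v : H), hdomK v.2⟩ + (Complex.I * κ) • (v : H)) = v := by
  obtain ⟨hLdis, hLdense, hLsurj⟩ := hL
  -- L + iκ surjective for all κ > 0
  have hsL1 : SurjAt L 1 := by
    intro y
    obtain ⟨v, hv⟩ := hLsurj y
    exact ⟨v, by simpa using hv⟩
  have hsL : ∀ κ : ℝ, 0 < κ → SurjAt L κ := surj_all L hLdis one_pos hsL1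
  -- choose a large κ₀
  set κ₀ : ℝ := c / (1 - 2*d) + 1 with hκ₀def
  have h12 : (0:ℝ) < 1 - 2*d := by linarith
  have hκ₀ : 0 < κ₀ := by positivity
  have hκ₀m : κ₀ * (1 - 2*d) = c + (1 - 2*d) := by
    rw [hκ₀def, add_mul, div_mul_cancel₀ _ h12.ne', one_mul]
  have hρ : c / κ₀ + 2*d < 1 := by
    rw [div_add' _ _ _ hκ₀.ne', div_lt_one hκ₀]
    nlinarith
  set ρ : ℝ := c / κ₀ + 2*d with hρdef
  have hρ0 : 0 ≤ ρ := by positivity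
  -- inverse of L + iκ₀
  obtain ⟨R, hR1, hR2, hRn⟩ := exists_inverse L hLdis hκ₀ (hsL κ₀ hκ₀)
  have hmem : ∀ w : H, R w ∈ L.domain := fun w => (hR1 w).choose
  have hTw : ∀ w : H, L ⟨R w, hmem w⟩ + (Complex.I * κ₀) • (R w) = w :=
    fun w => (hR1 w).choose_spec
  -- key contraction estimate
  have key : ∀ z : H, ‖K ⟨R z, hdomK (hmem z)⟩‖ ≤ ρ * ‖z‖ := by
    intro z
    have hb := hKb ⟨R z, hmem z⟩
    have hLu : L ⟨R z, hmem z⟩ = z - (Complex.I * κ₀) • R z := by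
      rw [eq_sub_iff_add_eq]; exact hTw z
    have hLun : ‖L (⟨R z, hmem z⟩ : L.domain)‖ ≤ ‖z‖ + κ₀ * ‖R z‖ := by
      rw [hLu]
      refine le_trans (norm_sub_le _ _) ?_
      rw [norm_smul, norm_mul, Complex.norm_I, one_mul, Complex.norm_real,
        Real.norm_eq_abs, abs_of_pos hκ₀]
    have hRz : ‖R z‖ ≤ κ₀⁻¹ * ‖z‖ :=
      le_trans (R.le_opNorm _) (mul_le_mul_of_nonneg_right hRn (norm_nonneg _))
    have hinv : κ₀ * κ₀⁻¹ = 1 := mul_inv_cancel₀ hκ₀.ne'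
    have hdivinv : c / κ₀ = c * κ₀⁻¹ := div_eq_mul_inv c κ₀
    have hb' : ‖K ⟨R z, hdomK (hmem z)⟩‖ ≤ c * ‖R z‖ + d * ‖L (⟨R z, hmem z⟩ : L.domain)‖ := hb
    have p1 : c * ‖R z‖ ≤ c * (κ₀⁻¹ * ‖z‖) := mul_le_mul_of_nonneg_left hRz hc.le
    have e1 : κ₀ * (κ₀⁻¹ * ‖z‖) = ‖z‖ := by rw [← mul_assoc, hinv, one_mul]
    have p2 : d * ‖L (⟨R z, hmem z⟩ : L.domain)‖ ≤ d * (‖z‖ + κ₀ * ‖R z‖) :=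
      mul_le_mul_of_nonneg_left hLun hd0.le
    have p3 : d * (κ₀ * ‖R z‖) ≤ d * ‖z‖ := by
      calc d * (κ₀ * ‖R z‖) ≤ d * (κ₀ * (κ₀⁻¹ * ‖z‖)) :=
            mul_le_mul_of_nonneg_left (mul_le_mul_of_nonneg_left hRz hκ₀.le) hd0.le
        _ = d * ‖z‖ := by rw [e1]
    have goal' : ρ * ‖z‖ = c * (κ₀⁻¹ * ‖z‖) + 2 * d * ‖z‖ := by
      rw [hρdef, hdivinv]; ring
    rw [goal']
    linarith
  -- M + iκ₀ surjective
  have hsMκ₀ : SurjAt M κ₀ := by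
    intro y
    set Φ : H → H := fun w => y - K ⟨R w, hdomK (hmem w)⟩ with hΦ
    have hlip : LipschitzWith ⟨ρ, hρ0⟩ Φ := by
      apply LipschitzWith.of_dist_le_mul
      intro w w'
      have hba : (⟨R w', hdomK (hmem w')⟩ - ⟨R w, hdomK (hmem w)⟩ : K.domain)
          = ⟨R (w' - w), hdomK (hmem (w' - w))⟩ := by
        refine Subtype.ext ?_
        push_cast
        rw [map_sub]
      have hdiff : Φ w - Φ w' = K ⟨R (w' - w), hdomK (hmem (w' - w))⟩ := by
        simp only [Φ]
        rw [← hba, K.map_sub]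
        abel
      rw [dist_eq_norm, dist_eq_norm, hdiff]
      calc ‖K ⟨R (w' - w), hdomK (hmem (w' - w))⟩‖ ≤ ρ * ‖w' - w‖ := key _
        _ = ρ * ‖w - w'‖ := by rw [norm_sub_rev]
    have hC : ContractingWith ⟨ρ, hρ0⟩ Φ := ⟨by exact_mod_cast hρ, hlip⟩
    obtain ⟨w, hw, -, -⟩ := hC.exists_fixedPoint y (edist_ne_top _ _)
    have hw' : y - K ⟨R w, hdomK (hmem w)⟩ = w := hw
    have hm : R w ∈ M.domain := by rw [hdomM]; exact hmem w
    refine ⟨⟨R w, hm⟩, ?_⟩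
    show M ⟨R w, hm⟩ + (Complex.I * κ₀) • (R w) = y
    rw [hM (R w) (hmem w) hm, add_right_comm, hTw w]
    exact (sub_eq_iff_eq_add.mp hw').symm
  -- M + iκ surjective for all κ > 0
  have hsM : ∀ κ : ℝ, 0 < κ → SurjAt M κ := surj_all M hMdis hκ₀ hsMκ₀
  constructor
  · refine ⟨hMdis, by rw [hdomM]; exact hLdense, ?_⟩
    intro y
    obtain ⟨v, hv⟩ := hsM 1 one_pos y
    refine ⟨v, ?_⟩
    simpa using hv
  · intro κ hκ _
    obtain ⟨Rκ, hRκ1, hRκ2, -⟩ := exists_inverse M hMdis hκ (hsM κ hκ)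
    refine ⟨Rκ, ?_, ?_⟩
    · intro y
      obtain ⟨h, hy⟩ := hRκ1 y
      have h' : Rκ y ∈ L.domain := by rw [← hdomM]; exact h
      refine ⟨h', ?_⟩
      rw [← hM (Rκ y) h' h]
      exact hy
    · intro v
      have hm : (v : H) ∈ M.domain := by rw [hdomM]; exact v.2
      have := hRκ2 ⟨(v : H), hm⟩
      rw [hM (v : H) v.2 hm] at this
      exact this
end

section
/- Let {φ_n} be a sequence of bounded Borel functions on ℝ with sup_{x∈ℝ} Σ_n |φ_n(x)|² ≤ M² < ∞, let A be a self-adjoint operator on a Hilbert space H with spectral measure E_A, and let {u_n} be vectors with Σ_n ‖u_n‖² ≤ ε². Then ‖Σ_n φ_n(A) u_n‖ ≤ M·ε, where the series converges weakly. -/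
variable {H : Type*} [NormedAddCommGroup H] [InnerProductSpace ℂ H] [CompleteSpace H]

/-- Let `A` be a self-adjoint operator with Borel functional calculus `FC` (so `FC` is a
norm-contractive star-homomorphism on bounded measurable functions: `φ ↦ φ(A)`).  Let `{φₙ}` be
bounded Borel functions on `ℝ` with `∑ₙ |φₙ(x)|² ≤ M²` pointwise and let `{uₙ}` be vectors with
`∑ₙ ‖uₙ‖² ≤ ε²`.  Then the series `∑ₙ φₙ(A) uₙ` converges weakly to a vector `v` with
`‖v‖ ≤ M ε`. -/
theorem weak_sum_bound (FC : (ℝ → ℂ) → (H →L[ℂ] H))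
    (hFCadd : ∀ g h : ℝ → ℂ, Measurable g → Measurable h →
      (∃ c, ∀ x, ‖g x‖ ≤ c) → (∃ c, ∀ x, ‖h x‖ ≤ c) → FC (g + h) = FC g + FC h)
    (hFCsmul : ∀ (c : ℂ) (h : ℝ → ℂ), Measurable h → (∃ c', ∀ x, ‖h x‖ ≤ c') →
      FC (c • h) = c • FC h)
    (hFCmul : ∀ g h : ℝ → ℂ, Measurable g → Measurable h →
      (∃ c, ∀ x, ‖g x‖ ≤ c) → (∃ c, ∀ x, ‖h x‖ ≤ c) →
      FC (g * h) = (FC g).comp (FC h))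
    (hFCstar : ∀ h : ℝ → ℂ, Measurable h → (∃ c, ∀ x, ‖h x‖ ≤ c) →
      FC (fun x => starRingEnd ℂ (h x)) = ContinuousLinearMap.adjoint (FC h))
    (hFCnorm : ∀ (h : ℝ → ℂ) (c : ℝ), (∀ x, ‖h x‖ ≤ c) → ‖FC h‖ ≤ c)
    (φ : ℕ → ℝ → ℂ) (hφm : ∀ n, Measurable (φ n))
    (M ε : ℝ) (hM : 0 ≤ M) (hε : 0 ≤ ε)
    (hφsq : ∀ (x : ℝ) (N : ℕ),
      ∑ n ∈ Finset.range N, ‖φ n x‖ ^ 2 ≤ M ^ 2)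
    (u : ℕ → H)
    (hu : ∀ N : ℕ, ∑ n ∈ Finset.range N, ‖u n‖ ^ 2 ≤ ε ^ 2) :
    ∃ v : H,
      (∀ w : H, HasSum (fun n => (inner ℂ w (FC (φ n) (u n)) : ℂ)) (inner ℂ w v)) ∧
        ‖v‖ ≤ M * ε := by
  classical
  -- the conjugate functions
  set ψ : ℕ → ℝ → ℂ := fun n x => starRingEnd ℂ (φ n x) with hψdef
  -- pointwise bound on each φ n
  have hφb : ∀ n x, ‖φ n x‖ ≤ M := by
    intro n x
    have h1 : ‖φ n x‖ ^ 2 ≤ M ^ 2 := by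
      have := hφsq x (n + 1)
      have h2 : ‖φ n x‖ ^ 2 ≤
          ∑ k ∈ Finset.range (n + 1), ‖φ k x‖ ^ 2 :=
        Finset.single_le_sum (f := fun k => ‖φ k x‖ ^ 2)
          (fun k _ => by positivity) (Finset.self_mem_range_succ n)
      linarith
    have := le_of_pow_le_pow_left₀ two_ne_zero hM h1
    simpa using this
  have hφbdd : ∀ n, ∃ c, ∀ x, ‖φ n x‖ ≤ c := fun n => ⟨M, hφb n⟩
  have hψm : ∀ n, Measurable (ψ n) := fun n => Complex.continuous_conj.measurable.comp (hφm n)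
  have hψb : ∀ n x, ‖ψ n x‖ ≤ M := fun n x => by
    simpa [hψdef] using hφb n x
  have hψbdd : ∀ n, ∃ c, ∀ x, ‖ψ n x‖ ≤ c := fun n => ⟨M, hψb n⟩
  -- adjoint identity
  have hadj : ∀ n, FC (ψ n) = ContinuousLinearMap.adjoint (FC (φ n)) := fun n =>
    hFCstar (φ n) (hφm n) (hφbdd n)
  -- additivity over finite sums
  have hFCsum : ∀ (s : Finset ℕ) (f : ℕ → ℝ → ℂ), (∀ n, Measurable (f n)) →
      (∀ n, ∃ c, ∀ x, ‖f n x‖ ≤ c) → FC (∑ n ∈ s, f n) = ∑ n ∈ s, FC (f n) := by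
    intro s f hfm hfb
    induction s using Finset.induction_on with
    | empty =>
      have h0 : FC 0 = 0 := by
        have := hFCsmul 0 0 measurable_const ⟨0, fun x => by simp⟩
        simpa using this
      simpa using h0
    | @insert a s ha ih =>
      have hsm : Measurable (∑ n ∈ s, f n) := by
        have : (∑ n ∈ s, f n) = fun x => ∑ n ∈ s, f n x := by
          ext x; simp
        rw [this]; exact Finset.measurable_sum s fun n _ => hfm n
      have hsb : ∃ c, ∀ x, ‖(∑ n ∈ s, f n) x‖ ≤ c := by
        choose c hc using hfb
        refine ⟨∑ n ∈ s, c n, fun x => ?_⟩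
        calc ‖(∑ n ∈ s, f n) x‖ = ‖∑ n ∈ s, f n x‖ := by simp
          _ ≤ ∑ n ∈ s, ‖f n x‖ := norm_sum_le _ _
          _ ≤ ∑ n ∈ s, c n := Finset.sum_le_sum fun n _ => hc n x
      rw [Finset.sum_insert ha, Finset.sum_insert ha,
        hFCadd (f a) (∑ n ∈ s, f n) (hfm a) hsm (hfb a) hsb, ih]
  -- the key ℓ² estimate for the adjoints
  have hA : ∀ (w : H) (s : Finset ℕ),
      ∑ n ∈ s, ‖FC (ψ n) w‖ ^ 2 ≤ M ^ 2 * ‖w‖ ^ 2 := by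
    intro w s
    -- each term as an inner ℂ product
    have hterm : ∀ n, ‖FC (ψ n) w‖ ^ 2 =
        RCLike.re (inner ℂ w ((FC (φ n * ψ n)) w) : ℂ) := by
      intro n
      have h1 : (inner ℂ (FC (ψ n) w) (FC (ψ n) w) : ℂ)
          = inner ℂ w ((FC (φ n)) (FC (ψ n) w)) := by
        nth_rewrite 1 [hadj n]
        exact ContinuousLinearMap.adjoint_inner_left (FC (φ n)) (FC (ψ n) w) w
      have h2 : FC (φ n * ψ n) = (FC (φ n)).comp (FC (ψ n)) :=
        hFCmul (φ n) (ψ n) (hφm n) (hψm n) (hφbdd n) (hψbdd n)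
      rw [h2]
      simp only [ContinuousLinearMap.comp_apply]
      rw [← h1]
      exact (inner_self_eq_norm_sq _).symm
    -- the summed function
    set g : ℝ → ℂ := ∑ n ∈ s, (φ n * ψ n) with hg
    have hsum : ∑ n ∈ s, ‖FC (ψ n) w‖ ^ 2 = RCLike.re (inner ℂ w (FC g w) : ℂ) := by
      rw [hg, hFCsum s (fun n => φ n * ψ n) (fun n => (hφm n).mul (hψm n))
        (fun n => ⟨M * M, fun x => by
          calc ‖(φ n * ψ n) x‖ = ‖φ n x‖ * ‖ψ n x‖ := by simp
            _ ≤ M * M := mul_le_mul (hφb n x) (hψb n x) (norm_nonneg _) hM⟩)]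
      simp only [ContinuousLinearMap.sum_apply, inner_sum, map_sum]
      exact Finset.sum_congr rfl fun n _ => hterm n
    -- the pointwise bound on g
    have hgb : ∀ x, ‖g x‖ ≤ M ^ 2 := by
      intro x
      have hx : g x = ∑ n ∈ s, ((Complex.normSq (φ n x) : ℝ) : ℂ) := by
        rw [hg]
        simp only [Finset.sum_apply, Pi.mul_apply, hψdef]
        exact Finset.sum_congr rfl fun n _ => Complex.mul_conj (φ n x)
      rw [hx, ← Complex.ofReal_sum]
      have h1 : ∑ n ∈ s, Complex.normSq (φ n x) ≤ M ^ 2 := by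
        have hsub : s ⊆ Finset.range (s.sup id + 1) := by
          intro n hn
          exact Finset.mem_range.2 (Nat.lt_succ_of_le (Finset.le_sup (f := id) hn))
        calc ∑ n ∈ s, Complex.normSq (φ n x)
            ≤ ∑ n ∈ Finset.range (s.sup id + 1), Complex.normSq (φ n x) :=
              Finset.sum_le_sum_of_subset_of_nonneg hsub
                (fun n _ _ => Complex.normSq_nonneg _)
          _ ≤ M ^ 2 := by
              have := hφsq x (s.sup id + 1)
              calc ∑ n ∈ Finset.range (s.sup id + 1), Complex.normSq (φ n x)
                  = ∑ n ∈ Finset.range (s.sup id + 1), ‖φ n x‖ ^ 2 :=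
                    Finset.sum_congr rfl fun n _ => (Complex.sq_norm (φ n x)).symm
                _ ≤ M ^ 2 := this
      have h2 : (0:ℝ) ≤ ∑ n ∈ s, Complex.normSq (φ n x) :=
        Finset.sum_nonneg fun n _ => Complex.normSq_nonneg _
      rw [Complex.norm_real, Real.norm_eq_abs, abs_of_nonneg h2]
      exact h1
    rw [hsum]
    calc RCLike.re (inner ℂ w (FC g w) : ℂ) ≤ ‖(inner ℂ w (FC g w) : ℂ)‖ :=
          RCLike.re_le_norm _
      _ ≤ ‖w‖ * ‖FC g w‖ := norm_inner_le_norm _ _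
      _ ≤ ‖w‖ * (‖FC g‖ * ‖w‖) := by
          gcongr
          exact (FC g).le_opNorm w
      _ ≤ ‖w‖ * (M ^ 2 * ‖w‖) := by
          have := hFCnorm g (M ^ 2) hgb
          gcongr
      _ = M ^ 2 * ‖w‖ ^ 2 := by ring
  -- key estimate: norm of finite partial sums
  have key : ∀ s : Finset ℕ,
      ‖∑ n ∈ s, FC (φ n) (u n)‖ ≤ M * Real.sqrt (∑ n ∈ s, ‖u n‖ ^ 2) := by
    intro s
    set S : H := ∑ n ∈ s, FC (φ n) (u n) with hS
    rcases eq_or_lt_of_le (norm_nonneg S) with h0 | h0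
    · rw [← h0]
      positivity
    · have hsq : ‖S‖ ^ 2 ≤ (M * Real.sqrt (∑ n ∈ s, ‖u n‖ ^ 2)) * ‖S‖ := by
        have h1 : ‖S‖ ^ 2 = RCLike.re (inner ℂ S S : ℂ) := (inner_self_eq_norm_sq S).symm
        have h2 : (inner ℂ S S : ℂ) = ∑ n ∈ s, (inner ℂ S (FC (φ n) (u n)) : ℂ) := by
          rw [hS]; rw [inner_sum]
        have h3 : ∀ n, (inner ℂ S (FC (φ n) (u n)) : ℂ) = inner ℂ (FC (ψ n) S) (u n) := by
          intro n
          rw [hadj n]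
          exact (ContinuousLinearMap.adjoint_inner_left (FC (φ n)) (u n) S).symm
        have h4 : RCLike.re (inner ℂ S S : ℂ) ≤ ∑ n ∈ s, ‖FC (ψ n) S‖ * ‖u n‖ := by
          rw [h2, map_sum]
          calc ∑ n ∈ s, RCLike.re (inner ℂ S (FC (φ n) (u n)) : ℂ)
              ≤ ∑ n ∈ s, ‖(inner ℂ S (FC (φ n) (u n)) : ℂ)‖ :=
                Finset.sum_le_sum fun n _ => RCLike.re_le_norm _
            _ ≤ ∑ n ∈ s, ‖FC (ψ n) S‖ * ‖u n‖ := by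
                refine Finset.sum_le_sum fun n _ => ?_
                rw [h3 n]
                exact norm_inner_le_norm _ _
        have h5 : ∑ n ∈ s, ‖FC (ψ n) S‖ * ‖u n‖ ≤
            Real.sqrt (∑ n ∈ s, ‖FC (ψ n) S‖ ^ 2) * Real.sqrt (∑ n ∈ s, ‖u n‖ ^ 2) :=
          Real.sum_mul_le_sqrt_mul_sqrt s _ _
        have h6 : Real.sqrt (∑ n ∈ s, ‖FC (ψ n) S‖ ^ 2) ≤ M * ‖S‖ := by
          have := hA S s
          calc Real.sqrt (∑ n ∈ s, ‖FC (ψ n) S‖ ^ 2)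
              ≤ Real.sqrt (M ^ 2 * ‖S‖ ^ 2) := Real.sqrt_le_sqrt this
            _ = M * ‖S‖ := by
                rw [show M ^ 2 * ‖S‖ ^ 2 = (M * ‖S‖) ^ 2 by ring]
                exact Real.sqrt_sq (by positivity)
        calc ‖S‖ ^ 2 = RCLike.re (inner ℂ S S : ℂ) := h1
          _ ≤ ∑ n ∈ s, ‖FC (ψ n) S‖ * ‖u n‖ := h4
          _ ≤ Real.sqrt (∑ n ∈ s, ‖FC (ψ n) S‖ ^ 2) *
              Real.sqrt (∑ n ∈ s, ‖u n‖ ^ 2) := h5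
          _ ≤ (M * ‖S‖) * Real.sqrt (∑ n ∈ s, ‖u n‖ ^ 2) := by
              have : (0:ℝ) ≤ Real.sqrt (∑ n ∈ s, ‖u n‖ ^ 2) := Real.sqrt_nonneg _
              gcongr
          _ = (M * Real.sqrt (∑ n ∈ s, ‖u n‖ ^ 2)) * ‖S‖ := by ring
      nlinarith [hsq, h0]
  -- summability of ‖u n‖ ^ 2
  have husum : Summable fun n => ‖u n‖ ^ 2 :=
    summable_of_sum_range_le (fun n => by positivity) hu
  -- summability of the vector series
  have hsumm : Summable fun n => FC (φ n) (u n) := by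
    rw [summable_iff_vanishing]
    intro e he
    rcases Metric.mem_nhds_iff.1 he with ⟨δ, hδ, hball⟩
    have hM1 : (0:ℝ) < M + 1 := by linarith
    have htail := (summable_iff_vanishing.1 husum)
      (Metric.ball 0 ((δ / (M + 1)) ^ 2)) (Metric.ball_mem_nhds 0 (by positivity))
    rcases htail with ⟨s, hs⟩
    refine ⟨s, fun t ht => ?_⟩
    apply hball
    have h1 : ∑ n ∈ t, ‖u n‖ ^ 2 < (δ / (M + 1)) ^ 2 := by
      have := hs t ht
      rw [Metric.mem_ball, Real.dist_eq, sub_zero] at this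
      calc ∑ n ∈ t, ‖u n‖ ^ 2 ≤ |∑ n ∈ t, ‖u n‖ ^ 2| := le_abs_self _
        _ < (δ / (M + 1)) ^ 2 := this
    rw [Metric.mem_ball, dist_zero_right]
    calc ‖∑ n ∈ t, FC (φ n) (u n)‖ ≤ M * Real.sqrt (∑ n ∈ t, ‖u n‖ ^ 2) := key t
      _ ≤ M * (δ / (M + 1)) := by
          gcongr
          calc Real.sqrt (∑ n ∈ t, ‖u n‖ ^ 2) ≤ Real.sqrt ((δ / (M + 1)) ^ 2) :=
                Real.sqrt_le_sqrt h1.le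
            _ = δ / (M + 1) := Real.sqrt_sq (by positivity)
      _ < δ := by
          rw [mul_div_assoc']
          rw [div_lt_iff₀ hM1]
          nlinarith
  obtain ⟨v, hv⟩ := hsumm
  refine ⟨v, fun w => ?_, ?_⟩
  · have := hv.mapL (innerSL ℂ w)
    simpa [innerSL_apply_apply] using this
  · have htend : Filter.Tendsto (fun N => ‖∑ n ∈ Finset.range N, FC (φ n) (u n)‖)
        Filter.atTop (nhds ‖v‖) := (hv.tendsto_sum_nat).norm
    refine le_of_tendsto' htend fun N => ?_
    calc ‖∑ n ∈ Finset.range N, FC (φ n) (u n)‖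
        ≤ M * Real.sqrt (∑ n ∈ Finset.range N, ‖u n‖ ^ 2) := key _
      _ ≤ M * ε := by
          gcongr
          calc Real.sqrt (∑ n ∈ Finset.range N, ‖u n‖ ^ 2)
              ≤ Real.sqrt (ε ^ 2) := Real.sqrt_le_sqrt (hu N)
            _ = ε := Real.sqrt_sq hε
end
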